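/- Let w : ℕ → {a,b} be a right-infinite binary word. The following are equivalent: (1) w is eventually periodic; (2) there exists a positive integer n with p(w,n) ≤ n; (3) there exists an integer N such that p(w,n) ≤ N for all n ≥ 1. -/
import Mathlib


/-!
STATEMENT 10: For a right-infinite binary word `w` (`a = false`, `b = true`),
the following are equivalent: (1) `w` is eventually periodic; (2) there is
`n ≥ 1` with `p(w,n) ≤ n`; (3) there is `N` with `p(w,n) ≤ N` for all `n ≥ 1`.
-/

namespace StringBricks

def IsFactor (w : ℕ → Bool) (u : List Bool) : Prop :=
  ∃ i : ℕ, ∀ j : Fin u.length, w (i + j) = u.get j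

def EventuallyPeriodic (w : ℕ → Bool) : Prop :=
  ∃ N p : ℕ, 1 ≤ p ∧ ∀ n : ℕ, N ≤ n → w (n + p) = w n

/-- The complexity function: the number of distinct factors of `w` of length `n`. -/
noncomputable def complexity (w : ℕ → Bool) (n : ℕ) : ℕ :=
  Set.ncard {u : List Bool | u.length = n ∧ IsFactor w u}

/-- The window of `w` of length `n` starting at `i`. -/
def win (w : ℕ → Bool) (i n : ℕ) : List Bool :=
  (List.range n).map (fun j => w (i + j))

lemma win_length (w : ℕ → Bool) (i n : ℕ) : (win w i n).length = n := by
  simp [win]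

lemma win_get (w : ℕ → Bool) (i n : ℕ) (j : ℕ) (hj : j < (win w i n).length) :
    (win w i n).get ⟨j, hj⟩ = w (i + j) := by
  simp [win]

lemma factorSet_eq_range (w : ℕ → Bool) (n : ℕ) :
    {u : List Bool | u.length = n ∧ IsFactor w u} = Set.range (fun i => win w i n) := by
  ext u
  constructor
  · rintro ⟨hlen, i, hi⟩
    refine ⟨i, ?_⟩
    apply List.ext_get
    · rw [win_length, hlen]
    · intro j h1 h2
      rw [win_get]
      exact hi ⟨j, h2⟩
  · rintro ⟨i, rfl⟩
    refine ⟨win_length w i n, i, ?_⟩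
    intro j
    have hj : (j : ℕ) < (win w i n).length := j.2
    rw [(win w i n).get_eq_getElem]
    simp only [win, List.getElem_map, List.getElem_range]

lemma complexity_eq (w : ℕ → Bool) (n : ℕ) :
    complexity w n = (Set.range (fun i => win w i n)).ncard := by
  rw [complexity, factorSet_eq_range]

lemma range_win_finite (w : ℕ → Bool) (n : ℕ) :
    (Set.range (fun i => win w i n)).Finite := by
  apply Set.Finite.subset (List.finite_length_eq (α := Bool) (n := n))
  rintro u ⟨i, rfl⟩
  exact win_length w i n

lemma win_take (w : ℕ → Bool) (i n : ℕ) :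
    (win w i (n + 1)).take n = win w i n := by
  simp [win, ← List.map_take, List.take_range, Nat.min_def]

lemma win_succ (w : ℕ → Bool) (i n : ℕ) :
    win w i (n + 1) = w i :: win w (i + 1) n := by
  rw [win, List.range_succ_eq_map]
  simp [win, Function.comp]
  intro j _
  congr 1
  omega

lemma range_win_takeimage (w : ℕ → Bool) (n : ℕ) :
    Set.range (fun i => win w i n) =
      (fun u => u.take n) '' Set.range (fun i => win w i (n + 1)) := by
  ext u
  constructor
  · rintro ⟨i, rfl⟩
    exact ⟨win w i (n + 1), ⟨i, rfl⟩, win_take w i n⟩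
  · rintro ⟨v, ⟨i, rfl⟩, rfl⟩
    exact ⟨i, (win_take w i n).symm⟩

lemma complexity_mono_succ (w : ℕ → Bool) (n : ℕ) :
    complexity w n ≤ complexity w (n + 1) := by
  rw [complexity_eq, complexity_eq, range_win_takeimage]
  exact Set.ncard_image_le (range_win_finite w (n + 1))

/-- If some letter-to-come is determined by the current window, propagate. -/
lemma ep_of_window_eq (w : ℕ → Bool) (m : ℕ) (hm : 1 ≤ m)
    (hdet : ∀ i i', win w i m = win w i' m → win w (i + 1) m = win w (i' + 1) m) :
    EventuallyPeriodic w := by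
  -- pigeonhole: two equal windows
  obtain ⟨i, i', hne, hg⟩ :=
    Finite.exists_ne_map_eq_of_infinite (fun i : ℕ => (fun j : Fin m => w (i + j)))
  have hwin : ∀ a b : ℕ, (∀ j : Fin m, w (a + j) = w (b + j)) → win w a m = win w b m := by
    intro a b h
    apply List.ext_get
    · rw [win_length, win_length]
    · intro j h1 h2
      rw [win_get, win_get]
      exact h ⟨j, by rwa [win_length] at h1⟩
  have hii' : win w i m = win w i' m := by
    apply hwin; intro j; exact congrFun hg j
  -- equal windows propagate to all shifts
  have hprop : ∀ k, win w (i + k) m = win w (i' + k) m := by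
    intro k
    induction k with
    | zero => simpa using hii'
    | succ k ih =>
      have := hdet _ _ ih
      have e1 : i + (k + 1) = i + k + 1 := by omega
      have e2 : i' + (k + 1) = i' + k + 1 := by omega
      rw [e1, e2]; exact this
  have hletters : ∀ k, w (i + k) = w (i' + k) := by
    intro k
    have h := hprop k
    obtain ⟨m', rfl⟩ : ∃ m', m = m' + 1 := ⟨m - 1, by omega⟩
    rw [win_succ, win_succ] at h
    exact (List.cons.injEq _ _ _ _).mp h |>.1
  -- WLOG i < i'
  rcases Nat.lt_or_ge i i' with hlt | hge
  · refine ⟨i, i' - i, by omega, ?_⟩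
    intro n hn
    have := hletters (n - i)
    have e1 : i + (n - i) = n := by omega
    have e2 : i' + (n - i) = n + (i' - i) := by omega
    rw [e1, e2] at this
    exact this.symm
  · have hlt : i' < i := by omega
    refine ⟨i', i - i', by omega, ?_⟩
    intro n hn
    have := hletters (n - i')
    have e1 : i + (n - i') = n + (i - i') := by omega
    have e2 : i' + (n - i') = n := by omega
    rw [e1, e2] at this
    exact this

/-- Core Morse–Hedlund step: if complexity stalls, the word is eventually periodic. -/
lemma ep_of_stall (w : ℕ → Bool) (m : ℕ) (hm : 1 ≤ m)
    (hstall : complexity w (m + 1) ≤ complexity w m) :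
    EventuallyPeriodic w := by
  have heq : ((fun u : List Bool => u.take m) ''
      Set.range (fun i => win w i (m + 1))).ncard
      = (Set.range (fun i => win w i (m + 1))).ncard := by
    rw [← range_win_takeimage]
    have h1 := complexity_mono_succ w m
    rw [complexity_eq, complexity_eq] at h1 hstall
    omega
  have hinj := Set.injOn_of_ncard_image_eq heq (range_win_finite w (m + 1))
  apply ep_of_window_eq w m hm
  intro i i' h
  have h2 : win w i (m + 1) = win w i' (m + 1) := by
    apply hinj ⟨i, rfl⟩ ⟨i', rfl⟩
    simp only [win_take]
    exact h
  -- drop the first letter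
  rw [win_succ, win_succ] at h2
  exact ((List.cons.injEq _ _ _ _).mp h2).2

lemma complexity_one_pos (w : ℕ → Bool) : 1 ≤ complexity w 1 := by
  rw [complexity_eq]
  have h : (Set.range (fun i => win w i 1)).Nonempty := ⟨win w 0 1, 0, rfl⟩
  exact (Set.ncard_pos (range_win_finite w 1)).mpr h

/-- (2) → (1). -/
lemma ep_of_low_complexity (w : ℕ → Bool) (n : ℕ) (hn : 1 ≤ n)
    (h : complexity w n ≤ n) : EventuallyPeriodic w := by
  by_cases hc : complexity w 1 ≤ 1
  · -- constant word
    have hle := Set.ncard_le_one (range_win_finite w 1) |>.mp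
      (by rwa [complexity_eq] at hc)
    refine ⟨0, 1, le_refl 1, ?_⟩
    intro k _
    have : win w (k + 1) 1 = win w k 1 := hle _ ⟨k + 1, rfl⟩ _ ⟨k, rfl⟩
    have h1 : w (k + 1) = w k := by
      have := congrArg (fun l => l.headI) this
      simpa [win] using this
    exact h1
  · push_neg at hc
    -- p 1 ≥ 2; find a stall
    by_contra hnep
    have hstrict : ∀ m, 1 ≤ m → complexity w m < complexity w (m + 1) := by
      intro m hm
      rcases lt_or_ge (complexity w m) (complexity w (m + 1)) with h' | h'
      · exact h'
      · exact absurd (ep_of_stall w m hm h') hnep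
    have hgrow : ∀ m, 1 ≤ m → m + 1 ≤ complexity w m := by
      intro m hm
      induction m, hm using Nat.le_induction with
      | base => omega
      | succ k hk ih => have := hstrict k hk; omega
    have := hgrow n hn
    omega

/-- (1) → (3). -/
lemma bounded_of_ep (w : ℕ → Bool) (h : EventuallyPeriodic w) :
    ∃ N : ℕ, ∀ n : ℕ, 1 ≤ n → complexity w n ≤ N := by
  obtain ⟨N, p, hp, hper⟩ := h
  refine ⟨N + p, ?_⟩
  intro n _
  have hsub : Set.range (fun i => win w i n) ⊆
      (fun i => win w i n) '' ((Finset.range (N + p) : Finset ℕ) : Set ℕ) := by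
    rintro u ⟨i, rfl⟩
    induction i using Nat.strong_induction_on with
    | _ i ih =>
      rcases lt_or_ge i (N + p) with hi | hi
      · exact ⟨i, by simpa using hi, rfl⟩
      · have hwin : win w i n = win w (i - p) n := by
          apply List.ext_get
          · rw [win_length, win_length]
          · intro j h1 h2
            rw [win_get, win_get]
            have hj : N ≤ i - p + j := by omega
            have := hper (i - p + j) hj
            have e : i - p + j + p = i + j := by omega
            rw [e] at this
            exact this
        show win w i n ∈ _
        rw [hwin]
        exact ih (i - p) (by omega)
  calc complexity w n = (Set.range (fun i => win w i n)).ncard := complexity_eq w n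
    _ ≤ ((fun i => win w i n) '' ((Finset.range (N + p) : Finset ℕ) : Set ℕ)).ncard :=
        Set.ncard_le_ncard hsub (Set.Finite.image _ (Set.toFinite _))
    _ ≤ ((Finset.range (N + p) : Finset ℕ) : Set ℕ).ncard :=
        Set.ncard_image_le (Set.toFinite _)
    _ = N + p := by rw [Set.ncard_coe_finset, Finset.card_range]

theorem eventuallyPeriodic_tfae (w : ℕ → Bool) :
    (EventuallyPeriodic w ↔ ∃ n : ℕ, 1 ≤ n ∧ complexity w n ≤ n) ∧
    (EventuallyPeriodic w ↔ ∃ N : ℕ, ∀ n : ℕ, 1 ≤ n → complexity w n ≤ N) := by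
  constructor
  · constructor
    · intro h
      obtain ⟨N, hN⟩ := bounded_of_ep w h
      exact ⟨N + 1, by omega, le_trans (hN (N + 1) (by omega)) (by omega)⟩
    · rintro ⟨n, hn, h⟩
      exact ep_of_low_complexity w n hn h
  · constructor
    · exact bounded_of_ep w
    · rintro ⟨N, hN⟩
      exact ep_of_low_complexity w (N + 1) (by omega)
        (le_trans (hN (N + 1) (by omega)) (by omega))

end StringBricks
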